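/- Let X_1,…,X_T be independent p×q random matrices with i.i.d. entries of mean 0, variance 1 and fourth moment ν₄, and let Σ_V be a deterministic q×q real symmetric positive semidefinite matrix with tr(Σ_V) = q. Define S̃ = √(Tq/p) · ((Tq)⁻¹ ∑_{t=1}^T X_t Σ_V X_tᵀ − I_p). Then E[tr(S̃²)] = (ν₄ − 3) q⁻¹ ∑_{j=1}^q (Σ_V)_{jj}² + (p+1) q⁻¹ ‖Σ_V‖_F². -/

import Mathlib

open MeasureTheory ProbabilityTheory Matrix
open scoped ENNReal

section Aux
variable {Ω : Type*} [MeasurableSpace Ω] {μ : Measure Ω} [IsProbabilityMeasure μ]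
variable {f g : Ω → ℝ}

lemma aux_q1 : (1:ℝ≥0∞)/2 = 1/4 + 1/4 := by
  rw [ENNReal.div_add_div_same, ENNReal.div_eq_div_iff] <;> norm_num

lemma aux_q2 : (1:ℝ≥0∞) = 1/2 + 1/2 := by
  rw [ENNReal.div_add_div_same, eq_comm, ENNReal.div_eq_one_iff] <;> norm_num

omit [IsProbabilityMeasure μ] in
lemma aux_mul_mem2 (hf : MemLp f 4 μ) (hg : MemLp g 4 μ) :
    MemLp (fun ω => f ω * g ω) 2 μ := by
  have := MemLp.smul (𝕜 := ℝ) (r := 2) hg hf (hpqr := ⟨by simpa [one_div] using aux_q1.symm⟩)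
  exact this

omit [IsProbabilityMeasure μ] in
lemma aux_int_mul (hf : MemLp f 2 μ) (hg : MemLp g 2 μ) :
    Integrable (fun ω => f ω * g ω) μ := by
  have := MemLp.smul (𝕜 := ℝ) (r := 1) hg hf (hpqr := ⟨by simpa [one_div] using aux_q2.symm⟩)
  exact (memLp_one_iff_integrable.mp this)

end Aux
section Mom
variable {Ω : Type*} [MeasurableSpace Ω] {μ : Measure Ω} [IsProbabilityMeasure μ]
variable {ι : Type*} [DecidableEq ι] {Y : ι → Ω → ℝ} {ν : ℝ}

lemma aux_pair (hL4 : ∀ a, MemLp (Y a) 4 μ)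
    (hindep : iIndepFun Y μ)
    (hmean : ∀ a, ∫ ω, Y a ω ∂μ = 0) (hvar : ∀ a, ∫ ω, (Y a ω)^2 ∂μ = 1)
    (a b : ι) :
    ∫ ω, Y a ω * Y b ω ∂μ = if a = b then 1 else 0 := by
  have hY2 : ∀ a, MemLp (Y a) 2 μ := fun a => (hL4 a).mono_exponent (by norm_num)
  by_cases hab : a = b
  · subst hab; rw [if_pos rfl, ← hvar a]; congr 1; funext ω; ring
  · rw [if_neg hab]
    have h := (hindep.indepFun hab).integral_mul_eq_mul_integral
      ((hY2 a).integrable one_le_two).aestronglyMeasurable ((hY2 b).integrable one_le_two).aestronglyMeasurable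
    simpa [hmean a, hmean b] using h

lemma aux_z4 (hmeas : ∀ a, Measurable (Y a)) (hL4 : ∀ a, MemLp (Y a) 4 μ)
    (hindep : iIndepFun Y μ)
    (hmean : ∀ a, ∫ ω, Y a ω ∂μ = 0) (hvar : ∀ a, ∫ ω, (Y a ω)^2 ∂μ = 1)
    (i j k l : ι) (hik : i ≠ k) (hil : i ≠ l) (hjk : j ≠ k) (hjl : j ≠ l) :
    ∫ ω, Y i ω * Y j ω * (Y k ω * Y l ω) ∂μ
      = (if i = j then 1 else 0) * (if k = l then 1 else 0) := by
  have hY2 : ∀ a, MemLp (Y a) 2 μ := fun a => (hL4 a).mono_exponent (by norm_num)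
  have h := (hindep.indepFun_mul_mul hmeas i j k l hik hil hjk hjl).integral_mul_eq_mul_integral
    (aux_int_mul (hY2 i) (hY2 j)).aestronglyMeasurable (aux_int_mul (hY2 k) (hY2 l)).aestronglyMeasurable
  have h' : ∫ ω, Y i ω * Y j ω * (Y k ω * Y l ω) ∂μ
      = (∫ ω, Y i ω * Y j ω ∂μ) * ∫ ω, Y k ω * Y l ω ∂μ := by
    simpa [Pi.mul_apply] using h
  rw [h', aux_pair hL4 hindep hmean hvar, aux_pair hL4 hindep hmean hvar]

lemma aux_z31 (hmeas : ∀ a, Measurable (Y a)) (hL4 : ∀ a, MemLp (Y a) 4 μ)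
    (hindep : iIndepFun Y μ)
    (hmean : ∀ a, ∫ ω, Y a ω ∂μ = 0)
    (a d : ι) (had : a ≠ d) :
    ∫ ω, Y a ω * Y a ω * Y a ω * Y d ω ∂μ = 0 := by
  have hY2 : ∀ a, MemLp (Y a) 2 μ := fun a => (hL4 a).mono_exponent (by norm_num)
  have hcube : Integrable (fun ω => Y a ω * Y a ω * Y a ω) μ :=
    aux_int_mul (aux_mul_mem2 (hL4 a) (hL4 a)) (hY2 a)
  have hind : ProbabilityTheory.IndepFun (fun ω => Y a ω * Y a ω * Y a ω) (Y d) μ :=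
    (hindep.indepFun had).comp (measurable_id.mul measurable_id |>.mul measurable_id) measurable_id
  have h := hind.integral_mul_eq_mul_integral hcube.aestronglyMeasurable ((hY2 d).integrable one_le_two).aestronglyMeasurable
  simpa [hmean d] using h

lemma aux_mom4 (hmeas : ∀ a, Measurable (Y a)) (hL4 : ∀ a, MemLp (Y a) 4 μ)
    (hindep : iIndepFun Y μ)
    (hmean : ∀ a, ∫ ω, Y a ω ∂μ = 0) (hvar : ∀ a, ∫ ω, (Y a ω)^2 ∂μ = 1)
    (hfour : ∀ a, ∫ ω, (Y a ω)^4 ∂μ = ν)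
    (a b c d : ι) :
    ∫ ω, Y a ω * Y b ω * Y c ω * Y d ω ∂μ =
      (if a = b then (1:ℝ) else 0) * (if c = d then 1 else 0)
      + (if a = c then (1:ℝ) else 0) * (if b = d then 1 else 0)
      + (if a = d then (1:ℝ) else 0) * (if b = c then 1 else 0)
      + (ν - 3) * (if a = b ∧ a = c ∧ a = d then 1 else 0) := by
  have Z4 := aux_z4 hmeas hL4 hindep hmean hvar
  have Z31 := aux_z31 hmeas hL4 hindep hmean
  have E4 : ∀ x : ι, ∫ ω, Y x ω * Y x ω * Y x ω * Y x ω ∂μ = ν := by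
    intro x; rw [← hfour x]; congr 1; funext ω; ring
  have rearr : ∀ (w x y z : ι), (∫ ω, Y w ω * Y x ω * Y y ω * Y z ω ∂μ)
      = ∫ ω, Y w ω * Y x ω * Y y ω * Y z ω ∂μ := fun _ _ _ _ => rfl
  by_cases hab : a = b
  · subst hab
    by_cases hac : a = c
    · subst hac
      by_cases had : a = d
      · subst had; rw [E4 a]; norm_num
      · have h : ∫ ω, Y a ω * Y a ω * Y a ω * Y d ω ∂μ = 0 := Z31 a d had
        rw [h]; simp [had]
    · by_cases had : a = d
      · subst had
        have h : ∫ ω, Y a ω * Y a ω * Y c ω * Y a ω ∂μ = 0 := by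
          rw [show (fun ω => Y a ω * Y a ω * Y c ω * Y a ω)
            = fun ω => Y a ω * Y a ω * Y a ω * Y c ω by funext ω; ring]
          exact Z31 a c hac
        have hca : ¬ c = a := fun h => hac h.symm
        rw [h]; simp [hac, hca]
      · have h : ∫ ω, Y a ω * Y a ω * Y c ω * Y d ω ∂μ
            = (if a = a then (1:ℝ) else 0) * (if c = d then 1 else 0) := by
          rw [show (fun ω => Y a ω * Y a ω * Y c ω * Y d ω)
            = fun ω => Y a ω * Y a ω * (Y c ω * Y d ω) by funext ω; ring]
          exact Z4 a a c d hac had hac had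
        rw [h]; simp [hac, had]
  · by_cases hac : a = c
    · subst hac
      by_cases hbd : b = d
      · subst hbd
        have h : ∫ ω, Y a ω * Y b ω * Y a ω * Y b ω ∂μ
            = (if a = a then (1:ℝ) else 0) * (if b = b then 1 else 0) := by
          rw [show (fun ω => Y a ω * Y b ω * Y a ω * Y b ω)
            = fun ω => Y a ω * Y a ω * (Y b ω * Y b ω) by funext ω; ring]
          exact Z4 a a b b hab hab hab hab
        rw [h]; simp [hab]
      · by_cases had : a = d
        · subst had
          have h : ∫ ω, Y a ω * Y b ω * Y a ω * Y a ω ∂μ = 0 := by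
            rw [show (fun ω => Y a ω * Y b ω * Y a ω * Y a ω)
              = fun ω => Y a ω * Y a ω * Y a ω * Y b ω by funext ω; ring]
            exact Z31 a b hab
          have hba : ¬ b = a := fun h => hab h.symm
          rw [h]; simp [hab, hbd, hba]
        · have h : ∫ ω, Y a ω * Y b ω * Y a ω * Y d ω ∂μ = 0 := by
            rw [show (fun ω => Y a ω * Y b ω * Y a ω * Y d ω)
              = fun ω => Y a ω * Y a ω * (Y b ω * Y d ω) by funext ω; ring]
            rw [Z4 a a b d hab had hab had]; simp [hbd]
          rw [h]; simp [hab, had, hbd]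
    · by_cases had : a = d
      · subst had
        by_cases hbc : b = c
        · subst hbc
          have h : ∫ ω, Y a ω * Y b ω * Y b ω * Y a ω ∂μ
              = (if a = a then (1:ℝ) else 0) * (if b = b then 1 else 0) := by
            rw [show (fun ω => Y a ω * Y b ω * Y b ω * Y a ω)
              = fun ω => Y a ω * Y a ω * (Y b ω * Y b ω) by funext ω; ring]
            exact Z4 a a b b hab hab hab hab
          rw [h]; simp [hab, hac]
        · have h : ∫ ω, Y a ω * Y b ω * Y c ω * Y a ω ∂μ = 0 := by
            rw [show (fun ω => Y a ω * Y b ω * Y c ω * Y a ω)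
              = fun ω => Y a ω * Y a ω * (Y b ω * Y c ω) by funext ω; ring]
            rw [Z4 a a b c hab hac hab hac]; simp [hbc]
          rw [h]; simp [hab, hac, hbc]
      · by_cases hbc : b = c
        · subst hbc
          by_cases hbd : b = d
          · subst hbd
            have h : ∫ ω, Y a ω * Y b ω * Y b ω * Y b ω ∂μ = 0 := by
              rw [show (fun ω => Y a ω * Y b ω * Y b ω * Y b ω)
                = fun ω => Y b ω * Y b ω * Y b ω * Y a ω by funext ω; ring]
              exact Z31 b a (fun h => hab h.symm)
            rw [h]; simp [hab, hac, had]
          · have h : ∫ ω, Y a ω * Y b ω * Y b ω * Y d ω ∂μ = 0 := by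
              rw [show (fun ω => Y a ω * Y b ω * Y b ω * Y d ω)
                = fun ω => Y b ω * Y b ω * (Y a ω * Y d ω) by funext ω; ring]
              rw [Z4 b b a d (fun h => hab h.symm) hbd (fun h => hab h.symm) hbd]
              simp [had]
            rw [h]; simp [hab, hac, had, hbd]
        · by_cases hbd : b = d
          · subst hbd
            have h : ∫ ω, Y a ω * Y b ω * Y c ω * Y b ω ∂μ = 0 := by
              rw [show (fun ω => Y a ω * Y b ω * Y c ω * Y b ω)
                = fun ω => Y b ω * Y b ω * (Y a ω * Y c ω) by funext ω; ring]
              rw [Z4 b b a c (fun h => hab h.symm) hbc (fun h => hab h.symm) hbc]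
              simp [hac]
            rw [h]; simp [hab, hac, had, hbc]
          · by_cases hcd : c = d
            · subst hcd
              have h : ∫ ω, Y a ω * Y b ω * Y c ω * Y c ω ∂μ = 0 := by
                rw [show (fun ω => Y a ω * Y b ω * Y c ω * Y c ω)
                  = fun ω => Y c ω * Y c ω * (Y a ω * Y b ω) by funext ω; ring]
                rw [Z4 c c a b (fun h => hac h.symm) (fun h => hbc h.symm)
                  (fun h => hac h.symm) (fun h => hbc h.symm)]
                simp [hab]
              rw [h]; simp [hab, hac, had, hbc, hbd]
            · have h : ∫ ω, Y a ω * Y b ω * Y c ω * Y d ω ∂μ = 0 := by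
                rw [show (fun ω => Y a ω * Y b ω * Y c ω * Y d ω)
                  = fun ω => Y a ω * Y b ω * (Y c ω * Y d ω) by funext ω; ring]
                rw [Z4 a b c d hac had hbc hbd]; simp [hab]
              rw [h]; simp [hab, hac, had, hbc, hbd, hcd]

end Mom


set_option maxHeartbeats 2000000 in
/-- For `S̃ = √(Tq/p) ((Tq)⁻¹ ∑_t X_t Σ_V X_tᵀ − I_p)` with jointly
i.i.d. entries (mean 0, variance 1, fourth moment ν₄) and `Σ_V` symmetric PSD with
`tr Σ_V = q`, one has `E tr(S̃²) = (ν₄−3) q⁻¹ ∑_j (Σ_V)_jj² + (p+1) q⁻¹ ‖Σ_V‖_F²`. -/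
theorem expectation_trace_square_renormalized
    {Ω : Type*} [MeasurableSpace Ω] (μ : Measure Ω) [IsProbabilityMeasure μ]
    (T p q : ℕ) (hT : 0 < T) (hp : 0 < p) (hq : 0 < q)
    (X : Fin T → Ω → Matrix (Fin p) (Fin q) ℝ)
    (Sv : Matrix (Fin q) (Fin q) ℝ) (hSvsym : Sv.IsSymm) (hSvpsd : Sv.PosSemidef)
    (htr : Sv.trace = (q : ℝ)) (ν : ℝ)
    (hmeas : ∀ t i j, Measurable fun ω => X t ω i j)
    (hL4 : ∀ t i j, MemLp (fun ω => X t ω i j) 4 μ)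
    (hindep : iIndepFun
      (fun (a : Fin T × Fin p × Fin q) ω => X a.1 ω a.2.1 a.2.2) μ)
    (hident : ∀ a b : Fin T × Fin p × Fin q,
      IdentDistrib (fun ω => X a.1 ω a.2.1 a.2.2) (fun ω => X b.1 ω b.2.1 b.2.2) μ μ)
    (hmean : ∀ t i j, ∫ ω, X t ω i j ∂μ = 0)
    (hvar : ∀ t i j, ∫ ω, (X t ω i j) ^ 2 ∂μ = 1)
    (hfour : ∀ t i j, ∫ ω, (X t ω i j) ^ 4 ∂μ = ν)
    (Stilde : Ω → Matrix (Fin p) (Fin p) ℝ)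
    (hS : ∀ ω, Stilde ω = Real.sqrt ((T * q : ℝ) / p) •
        (((T * q : ℝ))⁻¹ • ∑ t, X t ω * Sv * (X t ω)ᵀ - 1)) :
    ∫ ω, (Stilde ω * Stilde ω).trace ∂μ
      = (ν - 3) * (q : ℝ)⁻¹ * ∑ j, (Sv j j) ^ 2
        + ((p : ℝ) + 1) * (q : ℝ)⁻¹ * ∑ i, ∑ j, (Sv i j) ^ 2 := by
  classical
  set c : ℝ := ((T : ℝ) * q)⁻¹ with hc
  -- the coordinate process
  set Y : Fin T × Fin p × Fin q → Ω → ℝ := fun a ω => X a.1 ω a.2.1 a.2.2 with hY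
  have hYmeas : ∀ a, Measurable (Y a) := fun a => hmeas a.1 a.2.1 a.2.2
  have hY4 : ∀ a, MemLp (Y a) 4 μ := fun a => hL4 a.1 a.2.1 a.2.2
  have hYmean : ∀ a, ∫ ω, Y a ω ∂μ = 0 := fun a => hmean a.1 a.2.1 a.2.2
  have hYvar : ∀ a, ∫ ω, (Y a ω) ^ 2 ∂μ = 1 := fun a => hvar a.1 a.2.1 a.2.2
  have hYfour : ∀ a, ∫ ω, (Y a ω) ^ 4 ∂μ = ν := fun a => hfour a.1 a.2.1 a.2.2
  have M4 := aux_mom4 hYmeas hY4 hindep hYmean hYvar hYfour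
  have P2 := aux_pair hY4 hindep hYmean hYvar
  -- integrability of products
  have hintT : ∀ (s t : Fin T) (i i' : Fin p) (k' j' k j : Fin q),
      Integrable (fun ω => (X s ω i j * Sv j k * X s ω i' k)
        * (X t ω i' j' * Sv j' k' * X t ω i k')) μ := by
    intro s t i i' k' j' k j
    have h := (aux_int_mul (aux_mul_mem2 (hL4 s i j) (hL4 s i' k))
      (aux_mul_mem2 (hL4 t i' j') (hL4 t i k'))).const_mul (Sv j k * Sv j' k')
    exact h.congr (ae_of_all _ fun ω => by ring)
  have hY2 : ∀ (t : Fin T) (i : Fin p) (j : Fin q), MemLp (fun ω => X t ω i j) 2 μ :=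
    fun t i j => (hL4 t i j).mono_exponent (by norm_num)
  have hintP : ∀ (t : Fin T) (i : Fin p) (k j : Fin q),
      Integrable (fun ω => X t ω i j * Sv j k * X t ω i k) μ := by
    intro t i k j
    have h := (aux_int_mul (hY2 t i j) (hY2 t i k)).const_mul (Sv j k)
    exact h.congr (ae_of_all _ fun ω => by ring)
  -- values of the integrals
  have hval : ∀ (s t : Fin T) (i i' : Fin p) (k' j' k j : Fin q),
      ∫ ω, (X s ω i j * Sv j k * X s ω i' k) * (X t ω i' j' * Sv j' k' * X t ω i k') ∂μ
        = Sv j k * Sv j' k' *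
        ((if ((s,i,j) : Fin T × Fin p × Fin q) = (s,i',k) then (1:ℝ) else 0)
            * (if ((t,i',j') : Fin T × Fin p × Fin q) = (t,i,k') then 1 else 0)
        + (if ((s,i,j) : Fin T × Fin p × Fin q) = (t,i',j') then (1:ℝ) else 0)
            * (if ((s,i',k) : Fin T × Fin p × Fin q) = (t,i,k') then 1 else 0)
        + (if ((s,i,j) : Fin T × Fin p × Fin q) = (t,i,k') then (1:ℝ) else 0)
            * (if ((s,i',k) : Fin T × Fin p × Fin q) = (t,i',j') then 1 else 0)
        + (ν - 3) * (if ((s,i,j) : Fin T × Fin p × Fin q) = (s,i',k)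
            ∧ ((s,i,j) : Fin T × Fin p × Fin q) = (t,i',j')
            ∧ ((s,i,j) : Fin T × Fin p × Fin q) = (t,i,k') then 1 else 0)) := by
    intro s t i i' k' j' k j
    have e : (fun ω => (X s ω i j * Sv j k * X s ω i' k) * (X t ω i' j' * Sv j' k' * X t ω i k'))
        = fun ω => (Sv j k * Sv j' k')
          * (X s ω i j * X s ω i' k * X t ω i' j' * X t ω i k') := funext fun ω => by ring
    rw [e, integral_const_mul _ _]
    congr 1
    exact M4 (s,i,j) (s,i',k) (t,i',j') (t,i,k')
  have hvalP : ∀ (t : Fin T) (i : Fin p) (k j : Fin q),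
      ∫ ω, X t ω i j * Sv j k * X t ω i k ∂μ
        = Sv j k * (if ((t,i,j) : Fin T × Fin p × Fin q) = (t,i,k) then (1:ℝ) else 0) := by
    intro t i k j
    have e : (fun ω => X t ω i j * Sv j k * X t ω i k)
        = fun ω => Sv j k * (X t ω i j * X t ω i k) := funext fun ω => by ring
    rw [e, integral_const_mul _ _]
    congr 1
    exact P2 (t,i,j) (t,i,k)
  -- pointwise trace expansion
  have hnn : (0:ℝ) ≤ (T * q : ℝ) / p := by positivity
  have hptw : ∀ ω, (Stilde ω * Stilde ω).trace
      = ((T : ℝ) * q / p) * ((c * c) *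
          (∑ s, ∑ t, ∑ i, ∑ i', ∑ k', ∑ j', ∑ k, ∑ j,
            (X s ω i j * Sv j k * X s ω i' k) * (X t ω i' j' * Sv j' k' * X t ω i k'))
        - c * (∑ t, ∑ i, ∑ k, ∑ j, X t ω i j * Sv j k * X t ω i k)
        - c * (∑ t, ∑ i, ∑ k, ∑ j, X t ω i j * Sv j k * X t ω i k)
        + p) := by
    intro ω
    rw [hS ω]
    set A : Matrix (Fin p) (Fin p) ℝ := ∑ t, X t ω * Sv * (X t ω)ᵀ with hA
    have h1 : (Real.sqrt ((T * q : ℝ) / p) • (c • A - 1))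
        * (Real.sqrt ((T * q : ℝ) / p) • (c • A - 1))
        = ((T : ℝ) * q / p) • ((c • A - 1) * (c • A - 1)) := by
      rw [smul_mul_assoc, mul_smul_comm, smul_smul, Real.mul_self_sqrt hnn]
    have h2 : (c • A - 1) * (c • A - 1) = (c * c) • (A * A) - c • A - (c • A - 1) := by
      have h3 : (c • A) * (c • A) = (c * c) • (A * A) := by
        rw [smul_mul_assoc, mul_smul_comm, smul_smul]
      rw [sub_mul, mul_sub, mul_sub, mul_one, one_mul, one_mul, h3]
    rw [h1, h2, trace_smul, trace_sub, trace_sub, trace_sub, trace_smul, trace_smul,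
      trace_one]
    have htrA : A.trace = ∑ t, ∑ i, ∑ k, ∑ j, X t ω i j * Sv j k * X t ω i k := by
      rw [hA, Matrix.trace_sum]
      refine Finset.sum_congr rfl fun t _ => ?_
      simp [Matrix.trace, Matrix.diag, Matrix.mul_apply, Matrix.transpose_apply,
        Finset.sum_mul, Finset.mul_sum]
    have htrA2 : (A * A).trace = ∑ s, ∑ t, ∑ i, ∑ i', ∑ k', ∑ j', ∑ k, ∑ j,
        (X s ω i j * Sv j k * X s ω i' k) * (X t ω i' j' * Sv j' k' * X t ω i k') := by
      rw [hA, Finset.sum_mul_sum, Matrix.trace_sum]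
      refine Finset.sum_congr rfl fun s _ => ?_
      rw [Matrix.trace_sum]
      refine Finset.sum_congr rfl fun t _ => ?_
      simp [Matrix.trace, Matrix.diag, Matrix.mul_apply, Matrix.transpose_apply,
        Finset.sum_mul, Finset.mul_sum]
    rw [htrA, htrA2]
    simp only [smul_eq_mul, Fintype.card_fin]
    ring
  -- integrability of the sums
  have hIg4 : Integrable (fun ω => ∑ s, ∑ t, ∑ i, ∑ i', ∑ k', ∑ j', ∑ k, ∑ j,
      (X s ω i j * Sv j k * X s ω i' k) * (X t ω i' j' * Sv j' k' * X t ω i k')) μ :=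
    integrable_finset_sum _ fun s _ => integrable_finset_sum _ fun t _ =>
      integrable_finset_sum _ fun i _ => integrable_finset_sum _ fun i' _ =>
      integrable_finset_sum _ fun k' _ => integrable_finset_sum _ fun j' _ =>
      integrable_finset_sum _ fun k _ => integrable_finset_sum _ fun j _ =>
      hintT s t i i' k' j' k j
  have hIg2 : Integrable (fun ω => ∑ t, ∑ i, ∑ k, ∑ j, X t ω i j * Sv j k * X t ω i k) μ :=
    integrable_finset_sum _ fun t _ => integrable_finset_sum _ fun i _ =>
      integrable_finset_sum _ fun k _ => integrable_finset_sum _ fun j _ => hintP t i k j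
  -- compute the two integrals
  have hI2 : ∫ ω, (∑ t, ∑ i, ∑ k, ∑ j, X t ω i j * Sv j k * X t ω i k) ∂μ
      = (T : ℝ) * p * q := by
    rw [integral_finset_sum _ (fun t _ => integrable_finset_sum _ fun i _ =>
      integrable_finset_sum _ fun k _ => integrable_finset_sum _ fun j _ => hintP t i k j)]
    trans (∑ t : Fin T, ∑ i : Fin p, ∑ k : Fin q, ∑ j : Fin q,
      Sv j k * (if ((t,i,j) : Fin T × Fin p × Fin q) = (t,i,k) then (1:ℝ) else 0))
    · refine Finset.sum_congr rfl fun t _ => ?_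
      rw [integral_finset_sum _ (fun i _ => integrable_finset_sum _ fun k _ =>
        integrable_finset_sum _ fun j _ => hintP t i k j)]
      refine Finset.sum_congr rfl fun i _ => ?_
      rw [integral_finset_sum _ (fun k _ => integrable_finset_sum _ fun j _ => hintP t i k j)]
      refine Finset.sum_congr rfl fun k _ => ?_
      rw [integral_finset_sum _ (fun j _ => hintP t i k j)]
      exact Finset.sum_congr rfl fun j _ => hvalP t i k j
    · have htrd : ∑ j, Sv j j = (q : ℝ) := by
        rw [← htr]; simp [Matrix.trace, Matrix.diag]
      simp [Prod.mk.injEq, ite_and, mul_ite, ite_mul, Finset.sum_ite_eq, Finset.sum_ite_eq',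
        Finset.mul_sum, Finset.sum_mul, Finset.sum_const, htrd]
      ring
  have hI4 : ∫ ω, (∑ s, ∑ t, ∑ i, ∑ i', ∑ k', ∑ j', ∑ k, ∑ j,
      (X s ω i j * Sv j k * X s ω i' k) * (X t ω i' j' * Sv j' k' * X t ω i k')) ∂μ
      = (T:ℝ)^2 * p * ((q:ℝ) * q)
        + (T:ℝ) * p * (∑ j, ∑ k, Sv j k ^2) + (T:ℝ) * p^2 * (∑ j, ∑ k, Sv j k ^2)
        + (ν - 3) * ((T:ℝ) * p * ∑ j, Sv j j ^2) := by
    rw [integral_finset_sum _ (fun s _ => integrable_finset_sum _ fun t _ =>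
      integrable_finset_sum _ fun i _ => integrable_finset_sum _ fun i' _ =>
      integrable_finset_sum _ fun k' _ => integrable_finset_sum _ fun j' _ =>
      integrable_finset_sum _ fun k _ => integrable_finset_sum _ fun j _ =>
      hintT s t i i' k' j' k j)]
    trans (∑ s : Fin T, ∑ t : Fin T, ∑ i : Fin p, ∑ i' : Fin p, ∑ k' : Fin q, ∑ j' : Fin q,
        ∑ k : Fin q, ∑ j : Fin q, Sv j k * Sv j' k' *
        ((if ((s,i,j) : Fin T × Fin p × Fin q) = (s,i',k) then (1:ℝ) else 0)
            * (if ((t,i',j') : Fin T × Fin p × Fin q) = (t,i,k') then 1 else 0)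
        + (if ((s,i,j) : Fin T × Fin p × Fin q) = (t,i',j') then (1:ℝ) else 0)
            * (if ((s,i',k) : Fin T × Fin p × Fin q) = (t,i,k') then 1 else 0)
        + (if ((s,i,j) : Fin T × Fin p × Fin q) = (t,i,k') then (1:ℝ) else 0)
            * (if ((s,i',k) : Fin T × Fin p × Fin q) = (t,i',j') then 1 else 0)
        + (ν - 3) * (if ((s,i,j) : Fin T × Fin p × Fin q) = (s,i',k)
            ∧ ((s,i,j) : Fin T × Fin p × Fin q) = (t,i',j')
            ∧ ((s,i,j) : Fin T × Fin p × Fin q) = (t,i,k') then 1 else 0)))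
    · refine Finset.sum_congr rfl fun s _ => ?_
      rw [integral_finset_sum _ (fun t _ => integrable_finset_sum _ fun i _ =>
        integrable_finset_sum _ fun i' _ => integrable_finset_sum _ fun k' _ =>
        integrable_finset_sum _ fun j' _ => integrable_finset_sum _ fun k _ =>
        integrable_finset_sum _ fun j _ => hintT s t i i' k' j' k j)]
      refine Finset.sum_congr rfl fun t _ => ?_
      rw [integral_finset_sum _ (fun i _ => integrable_finset_sum _ fun i' _ =>
        integrable_finset_sum _ fun k' _ => integrable_finset_sum _ fun j' _ =>
        integrable_finset_sum _ fun k _ => integrable_finset_sum _ fun j _ =>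
        hintT s t i i' k' j' k j)]
      refine Finset.sum_congr rfl fun i _ => ?_
      rw [integral_finset_sum _ (fun i' _ => integrable_finset_sum _ fun k' _ =>
        integrable_finset_sum _ fun j' _ => integrable_finset_sum _ fun k _ =>
        integrable_finset_sum _ fun j _ => hintT s t i i' k' j' k j)]
      refine Finset.sum_congr rfl fun i' _ => ?_
      rw [integral_finset_sum _ (fun k' _ => integrable_finset_sum _ fun j' _ =>
        integrable_finset_sum _ fun k _ => integrable_finset_sum _ fun j _ =>
        hintT s t i i' k' j' k j)]
      refine Finset.sum_congr rfl fun k' _ => ?_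
      rw [integral_finset_sum _ (fun j' _ => integrable_finset_sum _ fun k _ =>
        integrable_finset_sum _ fun j _ => hintT s t i i' k' j' k j)]
      refine Finset.sum_congr rfl fun j' _ => ?_
      rw [integral_finset_sum _ (fun k _ => integrable_finset_sum _ fun j _ =>
        hintT s t i i' k' j' k j)]
      refine Finset.sum_congr rfl fun k _ => ?_
      rw [integral_finset_sum _ (fun j _ => hintT s t i i' k' j' k j)]
      exact Finset.sum_congr rfl fun j _ => hval s t i i' k' j' k j
    · -- the big combinatorial sum
      have e1 : ∀ (s t : Fin T) (i i' : Fin p) (k' j' k j : Fin q),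
          (Sv j k * Sv j' k' *
          ((if ((s,i,j) : Fin T × Fin p × Fin q) = (s,i',k) then (1:ℝ) else 0)
              * (if ((t,i',j') : Fin T × Fin p × Fin q) = (t,i,k') then 1 else 0)
          + (if ((s,i,j) : Fin T × Fin p × Fin q) = (t,i',j') then (1:ℝ) else 0)
              * (if ((s,i',k) : Fin T × Fin p × Fin q) = (t,i,k') then 1 else 0)
          + (if ((s,i,j) : Fin T × Fin p × Fin q) = (t,i,k') then (1:ℝ) else 0)
              * (if ((s,i',k) : Fin T × Fin p × Fin q) = (t,i',j') then 1 else 0)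
          + (ν - 3) * (if ((s,i,j) : Fin T × Fin p × Fin q) = (s,i',k)
              ∧ ((s,i,j) : Fin T × Fin p × Fin q) = (t,i',j')
              ∧ ((s,i,j) : Fin T × Fin p × Fin q) = (t,i,k') then 1 else 0)))
        = Sv j k * Sv j' k' * ((if i = i' ∧ j = k then (1:ℝ) else 0) * (if i = i' ∧ j' = k' then 1 else 0))
        + Sv j k * Sv j' k' * (if s = t ∧ i = i' ∧ j = j' ∧ k = k' then (1:ℝ) else 0)
        + Sv j k * Sv j' k' * (if s = t ∧ j = k' ∧ k = j' then (1:ℝ) else 0)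
        + Sv j k * Sv j' k' * ((ν - 3) * (if s = t ∧ i = i' ∧ j = k ∧ j = j' ∧ j = k' then (1:ℝ) else 0)) := by
        intro s t i i' k' j' k j
        rw [mul_add, mul_add, mul_add]
        congr 2
        · congr 2
          · congr 1
            · exact if_congr (by simp [Prod.ext_iff]; try tauto) rfl rfl
            · exact if_congr (by simp [Prod.ext_iff]; try tauto) rfl rfl
          · congr 1
            rw [show ((if ((s,i,j) : Fin T × Fin p × Fin q) = (t,i',j') then (1:ℝ) else 0) * (if ((s,i',k) : Fin T × Fin p × Fin q) = (t,i,k') then 1 else 0))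
              = if (((s,i,j) : Fin T × Fin p × Fin q) = (t,i',j')) ∧ (((s,i',k) : Fin T × Fin p × Fin q) = (t,i,k')) then (1:ℝ) else 0 by
                by_cases h1 : ((s,i,j) : Fin T × Fin p × Fin q) = (t,i',j') <;> by_cases h2 : ((s,i',k) : Fin T × Fin p × Fin q) = (t,i,k') <;> simp [h1, h2]]
            exact if_congr (by simp [Prod.ext_iff]; try tauto) rfl rfl
        · congr 1
          rw [show ((if ((s,i,j) : Fin T × Fin p × Fin q) = (t,i,k') then (1:ℝ) else 0) * (if ((s,i',k) : Fin T × Fin p × Fin q) = (t,i',j') then 1 else 0))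
            = if (((s,i,j) : Fin T × Fin p × Fin q) = (t,i,k')) ∧ (((s,i',k) : Fin T × Fin p × Fin q) = (t,i',j')) then (1:ℝ) else 0 by
              by_cases h1 : ((s,i,j) : Fin T × Fin p × Fin q) = (t,i,k') <;> by_cases h2 : ((s,i',k) : Fin T × Fin p × Fin q) = (t,i',j') <;> simp [h1, h2]]
          exact if_congr (by simp [Prod.ext_iff]; try tauto) rfl rfl
        · congr 1
          exact if_congr (by simp [Prod.ext_iff]; try tauto) rfl rfl
      simp only [e1]
      simp only [Finset.sum_add_distrib]
      congr 1
      · congr 1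
        · congr 1
          · have htrd : ∑ j, Sv j j = (q : ℝ) := by
              rw [← htr]; simp [Matrix.trace, Matrix.diag]
            rw [show ((T:ℝ)^2 * p * ((q:ℝ) * q))
              = (T:ℝ)^2 * p * ((∑ j, Sv j j) * (∑ j, Sv j j)) by rw [htrd]]
            simp [ite_and, mul_ite, ite_mul, Finset.sum_ite_eq, Finset.sum_ite_eq', Finset.mul_sum,
              Finset.sum_mul, Finset.sum_const]
            ring_nf
          · simp [ite_and, mul_ite, ite_mul, Finset.sum_ite_eq, Finset.sum_ite_eq', Finset.mul_sum,
              Finset.sum_mul, Finset.sum_const, sq]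
            ring_nf
            rw [Finset.sum_comm]
        · simp [ite_and, mul_ite, ite_mul, Finset.sum_ite_eq, Finset.sum_ite_eq', Finset.mul_sum,
            Finset.sum_mul, Finset.sum_const, sq]
          ring_nf
          refine Finset.sum_congr rfl fun a _ => Finset.sum_congr rfl fun b _ => ?_
          rw [hSvsym.apply b a]
          ring
      · simp [ite_and, mul_ite, ite_mul, Finset.sum_ite_eq, Finset.sum_ite_eq', Finset.mul_sum,
          Finset.sum_mul, Finset.sum_const, sq]
        ring_nf
        exact Finset.sum_congr rfl fun _ _ => by ring
  -- put everything together
  calc ∫ ω, (Stilde ω * Stilde ω).trace ∂μ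
      = ∫ ω, ((T : ℝ) * q / p) * ((c * c) *
          (∑ s, ∑ t, ∑ i, ∑ i', ∑ k', ∑ j', ∑ k, ∑ j,
            (X s ω i j * Sv j k * X s ω i' k) * (X t ω i' j' * Sv j' k' * X t ω i k'))
        - c * (∑ t, ∑ i, ∑ k, ∑ j, X t ω i j * Sv j k * X t ω i k)
        - c * (∑ t, ∑ i, ∑ k, ∑ j, X t ω i j * Sv j k * X t ω i k)
        + p) ∂μ := by
        exact integral_congr_ae (ae_of_all _ fun ω => hptw ω)
    _ = ((T : ℝ) * q / p) * ((c * c) *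
          ((T:ℝ)^2 * p * ((q:ℝ) * q)
            + (T:ℝ) * p * (∑ j, ∑ k, Sv j k ^2) + (T:ℝ) * p^2 * (∑ j, ∑ k, Sv j k ^2)
            + (ν - 3) * ((T:ℝ) * p * ∑ j, Sv j j ^2))
        - c * ((T : ℝ) * p * q) - c * ((T : ℝ) * p * q) + p) := by
        have hA1 : Integrable (fun ω => (c * c) *
            (∑ s, ∑ t, ∑ i, ∑ i', ∑ k', ∑ j', ∑ k, ∑ j,
              (X s ω i j * Sv j k * X s ω i' k) * (X t ω i' j' * Sv j' k' * X t ω i k')) - c * (∑ t, ∑ i, ∑ k, ∑ j, X t ω i j * Sv j k * X t ω i k)) μ := by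
          exact (hIg4.const_mul _).sub (hIg2.const_mul _)
        have hA2 : Integrable (fun ω => (c * c) *
            (∑ s, ∑ t, ∑ i, ∑ i', ∑ k', ∑ j', ∑ k, ∑ j,
              (X s ω i j * Sv j k * X s ω i' k) * (X t ω i' j' * Sv j' k' * X t ω i k')) - c * (∑ t, ∑ i, ∑ k, ∑ j, X t ω i j * Sv j k * X t ω i k) - c * (∑ t, ∑ i, ∑ k, ∑ j, X t ω i j * Sv j k * X t ω i k)) μ := by
          exact hA1.sub (hIg2.const_mul _)
        rw [integral_const_mul _ _]
        congr 1
        rw [integral_add hA2 (integrable_const _), integral_sub hA1 (hIg2.const_mul _),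
          integral_sub (hIg4.const_mul _) (hIg2.const_mul _),
          integral_const_mul _ _, integral_const_mul _ _, hI4, hI2,
          integral_const]
        simp [measure_univ]
    _ = (ν - 3) * (q : ℝ)⁻¹ * ∑ j, (Sv j j) ^ 2
        + ((p : ℝ) + 1) * (q : ℝ)⁻¹ * ∑ i, ∑ j, (Sv i j) ^ 2 := by
        rw [hc]
        have hT0 : (T:ℝ) ≠ 0 := Nat.cast_ne_zero.mpr hT.ne'
        have hp0 : (p:ℝ) ≠ 0 := Nat.cast_ne_zero.mpr hp.ne'
        have hq0 : (q:ℝ) ≠ 0 := Nat.cast_ne_zero.mpr hq.ne'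
        field_simp
        ring
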